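/- Let B = ℚ[X]_{(X)} and A = ℤ + XB ⊆ B. The ideal M = XB of A is not a pure ideal of A; more precisely, Tor₁^A(A/M, ℤ) ≅ M/M² ≠ 0 (where ℤ ≅ A/M as A-modules). -/

import Mathlib

open CategoryTheory CategoryTheory.Limits

noncomputable section

universe u

/-- `pdLE R M n` : the projective dimension of the `R`-module `M` is at most `n`,
expressed by the vanishing of `Ext^{n+1}(M, N)` for all `N`. -/
def pdLE (R : Type u) [CommRing R] (M : Type u) [AddCommGroup M] [Module R M] (n : ℕ) : Prop :=
  ∀ N : ModuleCat.{u} R,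
    IsZero (((Ext R (ModuleCat.{u} R) (n + 1)).obj (Opposite.op (ModuleCat.of R M))).obj N)

/-- `fdLE R M n` : the flat dimension of the `R`-module `M` is at most `n`,
expressed by the vanishing of `Tor_{n+1}(M, N)` for all `N`. -/
def fdLE (R : Type u) [CommRing R] (M : Type u) [AddCommGroup M] [Module R M] (n : ℕ) : Prop :=
  ∀ N : ModuleCat.{u} R,
    IsZero (((Tor' (ModuleCat.{u} R) (n + 1)).obj (ModuleCat.of R M)).obj N)

/-- A commutative ring `R` is strong `n`-perfect if every `R`-module of flat dimension
at most `n` has projective dimension at most `n`. -/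
def IsStrongNPerfect (R : Type u) [CommRing R] (n : ℕ) : Prop :=
  ∀ (M : Type u) [AddCommGroup M] [Module R M], fdLE R M n → pdLE R M n


section AuxXB
open CategoryTheory.MonoidalCategory
noncomputable section InnerAux
variable {R : Type u} [CommRing R]

instance instPCXB (X : ModuleCat.{u} R) :
    PreservesColimits ((tensoringRight (ModuleCat.{u} R)).obj X) :=
  Limits.preservesColimits_of_natIso
    (F := tensorLeft X)
    (NatIso.ofComponents (fun Y => β_ X Y)
      (by intros; exact (BraidedCategory.braiding_naturality_right X _).symm ▸ (β_ X _).hom ≫= rfl))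

private lemma smul_mk_zero_xb (I : Ideal R) {m : R} (hm : m ∈ I) (x : R ⧸ I) : m • x = 0 := by
  obtain ⟨a, rfl⟩ := Submodule.Quotient.mk_surjective _ x
  rw [← Submodule.Quotient.mk_smul, Submodule.Quotient.mk_eq_zero]
  exact Ideal.mul_mem_right a I hm

private lemma lTensor_subtype_zero_xb (I : Ideal R) :
    LinearMap.lTensor (R ⧸ I) I.subtype = 0 := by
  apply TensorProduct.ext'
  intro x m
  have : (LinearMap.lTensor (R ⧸ I) I.subtype) (x ⊗ₜ m) = x ⊗ₜ[R] (m : R) := rfl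
  rw [this]
  calc x ⊗ₜ[R] (m : R) = x ⊗ₜ[R] ((m : R) • (1 : R)) := by rw [smul_eq_mul, mul_one]
    _ = ((m : R) • x) ⊗ₜ[R] (1 : R) := (TensorProduct.smul_tmul _ _ _).symm
    _ = 0 := by rw [smul_mk_zero_xb I m.2, TensorProduct.zero_tmul]

private lemma subsingleton_cotangent_of_flat_xb (I : Ideal R) (h : Module.Flat R (R ⧸ I)) :
    Subsingleton I.Cotangent := by
  have hinj : Function.Injective ⇑(LinearMap.lTensor (R ⧸ I) I.subtype) :=
    Module.Flat.lTensor_preserves_injective_linearMap I.subtype (Submodule.injective_subtype I)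
  rw [lTensor_subtype_zero_xb] at hinj
  have : Subsingleton (TensorProduct R (R ⧸ I) I) :=
    ⟨fun a b => hinj (by simp)⟩
  exact (TensorProduct.quotTensorEquivQuotSMul (↥I) I).symm.toEquiv.subsingleton

set_option maxHeartbeats 1000000 in
private lemma tor_iso_cotangent_xb (R : Type u) [CommRing R] (I : Ideal R) :
    Nonempty ((((Tor' (ModuleCat.{u} R) 1).obj (ModuleCat.of R (R ⧸ I))).obj
      (ModuleCat.of R (R ⧸ I))) ≃ₗ[R] I.Cotangent) := by
  classical
  let Qc : ModuleCat.{u} R := ModuleCat.of R (R ⧸ I)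
  let Mc : ModuleCat.{u} R := ModuleCat.of R I
  let Ac : ModuleCat.{u} R := ModuleCat.of R R
  let ι : Mc ⟶ Ac := ModuleCat.ofHom I.subtype
  let qm : Ac ⟶ Qc := ModuleCat.ofHom I.mkQ
  obtain ⟨P⟩ : Nonempty (ProjectiveResolution Qc) := ⟨(HasProjectiveResolution.out (Z := Qc)).some⟩
  set K := P.complex with hK
  haveI hflat : ∀ n, Module.Flat R (K.X n) := fun n => by
    haveI hp : Projective (ModuleCat.of R (K.X n : Type u)) := inferInstanceAs (Projective (K.X n))
    haveI : Module.Projective R (K.X n) := (IsProjective.iff_projective.{u,u} (K.X n)).mpr hp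
    infer_instance
  let FM := (tensoringRight (ModuleCat.{u} R)).obj Mc
  let FA := (tensoringRight (ModuleCat.{u} R)).obj Ac
  let FQ := (tensoringRight (ModuleCat.{u} R)).obj Qc
  let XM := (FM.mapHomologicalComplex (ComplexShape.down ℕ)).obj K
  let XA := (FA.mapHomologicalComplex (ComplexShape.down ℕ)).obj K
  let XQ := (FQ.mapHomologicalComplex (ComplexShape.down ℕ)).obj K
  let f : XM ⟶ XA :=
    (NatTrans.mapHomologicalComplex ((tensoringRight _).map ι) (ComplexShape.down ℕ)).app K
  let g : XA ⟶ XQ :=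
    (NatTrans.mapHomologicalComplex ((tensoringRight _).map qm) (ComplexShape.down ℕ)).app K
  have hfg : f ≫ g = 0 := by
    ext n : 1
    apply ModuleCat.hom_ext
    apply TensorProduct.ext'
    intro p m0
    let m : ↥I := m0
    show (g.f n) ((f.f n) (p ⊗ₜ m)) = 0
    have h1 : (f.f n) (p ⊗ₜ m) = p ⊗ₜ[R] ((m : R)) :=
      ModuleCat.MonoidalCategory.whiskerLeft_apply (K.X n) ι p m
    have h2 : (g.f n) (p ⊗ₜ[R] ((m : R))) = p ⊗ₜ[R] (I.mkQ (m : R)) :=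
      ModuleCat.MonoidalCategory.whiskerLeft_apply (K.X n) qm p (m : R)
    rw [h1, h2, show I.mkQ (m : R) = 0 from (Submodule.Quotient.mk_eq_zero I).mpr m.2,
      TensorProduct.tmul_zero]
    rfl
  let S : ShortComplex (HomologicalComplex (ModuleCat.{u} R) (ComplexShape.down ℕ)) :=
    ShortComplex.mk f g hfg
  have hSE : S.ShortExact := by
    apply HomologicalComplex.shortExact_of_degreewise_shortExact
    intro n
    refine { exact := ?_, mono_f := ?_, epi_g := ?_ }
    · rw [ShortComplex.ShortExact.moduleCat_exact_iff_function_exact]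
      exact lTensor_exact (K.X n) (LinearMap.exact_subtype_mkQ I) (Submodule.mkQ_surjective I)
    · rw [ModuleCat.mono_iff_injective]
      exact Module.Flat.lTensor_preserves_injective_linearMap I.subtype
        (Submodule.injective_subtype I)
    · rw [ModuleCat.epi_iff_surjective]
      exact LinearMap.lTensor_surjective (K.X n) (Submodule.mkQ_surjective I)
  -- `XA ≅ K`
  let eK : XA ≅ K := HomologicalComplex.Hom.isoOfComponents
    (fun n => LinearEquiv.toModuleIso (TensorProduct.rid R (K.X n : Type u)))
    (by
      intro i j hij
      apply ModuleCat.hom_ext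
      apply TensorProduct.ext'
      intro p a
      show (K.d i j) ((TensorProduct.rid R (K.X i : Type u)) (p ⊗ₜ a)) =
        (TensorProduct.rid R (K.X j : Type u)) ((XA.d i j) (p ⊗ₜ a))
      have h1 : (XA.d i j) (p ⊗ₜ a) = ((K.d i j) p) ⊗ₜ[R] a :=
        ModuleCat.MonoidalCategory.whiskerRight_apply (K.d i j) Ac p a
      rw [h1]
      simp [TensorProduct.rid_tmul, map_smul])
  have hH1A : IsZero (XA.homology 1) := by
    have h := (HomologicalComplex.exactAt_iff_isZero_homology K 1).mp (P.complex_exactAt_succ 0)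
    exact IsZero.of_iso h
      ((HomologicalComplex.homologyFunctor (ModuleCat.{u} R) (ComplexShape.down ℕ) 1).mapIso eK)
  -- the induced map on `H₀` is zero
  have hexact0 := (ShortComplex.ShortExact.moduleCat_exact_iff_function_exact _).mp P.exact₀
  let σ : ((ChainComplex.single₀ (ModuleCat.{u} R)).obj Qc).X 0 ≅ Qc :=
    HomologicalComplex.singleObjXSelf (ComplexShape.down ℕ) 0 Qc
  have hcomp : f.f 0 ≫ XA.pOpcycles 0 = 0 := by
    apply ModuleCat.hom_ext
    apply TensorProduct.ext'
    intro p m0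
    let m : ↥I := m0
    show (XA.pOpcycles 0) ((f.f 0) (p ⊗ₜ m)) = 0
    have h1 : (f.f 0) (p ⊗ₜ m) = p ⊗ₜ[R] ((m : R) : R) :=
      ModuleCat.MonoidalCategory.whiskerLeft_apply (K.X 0) ι p m
    have hker : (P.π.f 0) (((m : R) : R) • p) = 0 := by
      have hσ : σ.hom ((P.π.f 0) (((m : R) : R) • p)) = 0 := by
        rw [map_smul, map_smul]
        exact smul_mk_zero_xb I m.2 _
      have hinj : Function.Injective σ.hom := (ModuleCat.mono_iff_injective σ.hom).mp inferInstance
      apply hinj; rw [hσ, map_zero]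
    obtain ⟨w, hw⟩ := (hexact0 _).mp hker
    have h2 : p ⊗ₜ[R] ((m : R) : R) = (XA.d 1 0) (w ⊗ₜ (1 : R)) := by
      have h3 : (XA.d 1 0) (w ⊗ₜ (1 : R)) = ((K.d 1 0) w) ⊗ₜ[R] (1 : R) :=
        ModuleCat.MonoidalCategory.whiskerRight_apply (K.d 1 0) Ac w (1 : R)
      rw [h3, hw, TensorProduct.smul_tmul, smul_eq_mul, mul_one]
    rw [h1, h2]
    exact ConcreteCategory.congr_hom (HomologicalComplex.d_pOpcycles XA 1 0) (w ⊗ₜ (1 : R))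
  have hH0f : HomologicalComplex.homologyMap f 0 = 0 := by
    have hop : HomologicalComplex.opcyclesMap f 0 = 0 := by
      rw [← cancel_epi (XM.pOpcycles 0), HomologicalComplex.p_opcyclesMap, comp_zero, hcomp]
    rw [← cancel_mono (XA.homologyι 0), HomologicalComplex.homologyι_naturality, hop, comp_zero,
      zero_comp]
  have hrel : (ComplexShape.down ℕ).Rel 1 0 := by simp
  haveI hmono : Mono (hSE.δ 1 0 hrel) :=
    (hSE.homology_exact₃ 1 0 hrel).mono_g (hH1A.eq_of_src _ _)
  haveI hepi : Epi (hSE.δ 1 0 hrel) := (hSE.homology_exact₁ 1 0 hrel).epi_f hH0f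
  haveI : IsIso (hSE.δ 1 0 hrel) := isIso_of_mono_of_epi _
  haveI : PreservesFiniteColimits FM := inferInstance
  haveI : IsIso (P.fromLeftDerivedZero' FM) := inferInstance
  let e₁ : (((Tor' (ModuleCat.{u} R) 1).obj Qc).obj Qc : ModuleCat.{u} R) ≅ XQ.homology 1 :=
    P.isoLeftDerivedObj FQ 1
  let e₂ : XQ.homology 1 ≅ XM.homology 0 := asIso (hSE.δ 1 0 hrel)
  let e₃ : XM.homology 0 ≅ XM.opcycles 0 := ChainComplex.isoHomologyι₀ XM
  let e₄ : XM.opcycles 0 ≅ FM.obj Qc := asIso (P.fromLeftDerivedZero' FM)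
  exact ⟨(e₁ ≪≫ e₂ ≪≫ e₃ ≪≫ e₄).toLinearEquiv.trans
    (TensorProduct.quotTensorEquivQuotSMul (↥I) I)⟩

end InnerAux
end AuxXB

set_option synthInstance.maxHeartbeats 1000000 in
set_option maxHeartbeats 2000000 in
/-- For `B = ℚ[X]_{(X)}` and `A = ℤ + XB`, the ideal `M = XB` of `A` is not pure;
more precisely `Tor₁^A(A/M, A/M) ≅ M/M²` is nonzero (note `A/M ≅ ℤ`). -/
theorem xB_not_pure_ideal
    (P : Ideal (Polynomial ℚ)) (hP : P = Ideal.span {Polynomial.X}) [P.IsPrime]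
    (A : Subring (Localization.AtPrime P))
    (hA : ∀ x : Localization.AtPrime P,
      x ∈ A ↔ ∃ n : ℤ, x - (n : Localization.AtPrime P) ∈
        P.map (algebraMap (Polynomial ℚ) (Localization.AtPrime P)))
    (M : Ideal A)
    (hM : ∀ y : A, y ∈ M ↔ (y : Localization.AtPrime P) ∈
        P.map (algebraMap (Polynomial ℚ) (Localization.AtPrime P))) :
    ¬ Module.Flat A (A ⧸ M) ∧ Nontrivial M.Cotangent ∧
      Nonempty ((((Tor' (ModuleCat A) 1).obj (ModuleCat.of A (A ⧸ M))).obj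
        (ModuleCat.of A (A ⧸ M))) ≃ₗ[A] M.Cotangent) := by
  set B := Localization.AtPrime P
  set Q := P.map (algebraMap (Polynomial ℚ) B) with hQ
  set XB : B := algebraMap (Polynomial ℚ) B Polynomial.X with hXBdef
  have hXP : Polynomial.X ∈ P := by rw [hP]; exact Ideal.subset_span rfl
  have hXB : XB ∈ Q := Ideal.mem_map_of_mem _ hXP
  have hXA : XB ∈ A := (hA XB).mpr ⟨0, by simpa using hXB⟩
  let x : A := ⟨XB, hXA⟩
  have hxM : x ∈ M := (hM x).mpr hXB
  have hQspan : Q = Ideal.span {XB} := by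
    have h := congrArg (Ideal.map (algebraMap (Polynomial ℚ) B)) hP
    rw [Ideal.map_span, Set.image_singleton] at h
    exact h
  have hXBne : XB ≠ 0 := by
    have hinj : Function.Injective (algebraMap (Polynomial ℚ) B) :=
      IsLocalization.injective B P.primeCompl_le_nonZeroDivisors
    intro h0
    exact Polynomial.X_ne_zero (hinj (by rw [← hXBdef, h0, map_zero]))
  have hQne : Q ≠ ⊤ := by
    rw [show Q = Ideal.map (algebraMap (Polynomial ℚ) B) P from rfl,
      Localization.AtPrime.map_eq_maximalIdeal]
    exact (IsLocalRing.maximalIdeal.isMaximal _).ne_top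
  have hx2 : (x : A) ∉ M ^ 2 := by
    intro hmem
    have hQQ : ((x : A) : B) ∈ Q * Q := by
      have hle : M * M ≤ Ideal.comap (A.subtype) (Q * Q) := by
        rw [Ideal.mul_le]
        intro r hr s hs
        exact Ideal.mul_mem_mul ((hM r).mp hr) ((hM s).mp hs)
      exact Ideal.mem_comap.mp (hle (by rwa [← pow_two]))
    rw [hQspan, Ideal.span_singleton_mul_span_singleton] at hQQ
    obtain ⟨c, hc⟩ := Ideal.mem_span_singleton'.mp hQQ
    have hzero : XB * (c * XB - 1) = 0 := by
      have : (x : B) = XB := rfl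
      rw [this] at hc
      linear_combination hc
    rcases mul_eq_zero.mp hzero with h | h
    · exact hXBne h
    · have hcx : c * XB = 1 := by linear_combination h
      have hunit : IsUnit XB := IsUnit.of_mul_eq_one c (by rw [mul_comm]; exact hcx)
      exact hQne (Ideal.eq_top_of_isUnit_mem Q hXB hunit)
  have hnt : Nontrivial M.Cotangent := by
    refine ⟨M.toCotangent ⟨x, hxM⟩, 0, fun h => hx2 ?_⟩
    exact (Ideal.toCotangent_eq_zero M ⟨x, hxM⟩).mp h
  refine ⟨fun hF => ?_, hnt, tor_iso_cotangent_xb A M⟩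
  exact (not_subsingleton_iff_nontrivial.mpr hnt) (subsingleton_cotangent_of_flat_xb M hF)
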